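/- Let s ≥ 3 be an integer and let λ be an s-minimal biliaison type with u_λ ≥ 2. Let f be the residue of d_λ modulo s, with 0 ≤ f < s. Then q_s(λ) ≥ 2s(s−2) if f = 0; q_s(λ) ≥ 3s² − 8s + 1 if f = 1 or f = s−1; and q_s(λ) ≥ 2s² − 4s + 4 if f ∉ {0, 1, s−1}. -/

import Mathlib

/-- An `s`-minimal biliaison type: a strictly increasing finite sequence of
positive integers, all strictly less than `s` (the empty sequence is allowed). -/
def SMinimal (s : ℕ) (l : List ℕ) : Prop :=
  l.Chain' (· < ·) ∧ ∀ k ∈ l, 0 < k ∧ k < s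

/-- The quadratic form `q_s(λ) = Σ_i k_i(s−1)(s−k_i) − 2 Σ_{i<j} k_i(s−k_j)`. -/
def qform (s : ℕ) (l : List ℕ) : ℤ :=
  (∑ i : Fin l.length, (l.get i : ℤ) * ((s : ℤ) - 1) * ((s : ℤ) - l.get i))
  - 2 * ∑ i : Fin l.length, ∑ j : Fin l.length,
      if (i : ℕ) < (j : ℕ) then (l.get i : ℤ) * ((s : ℤ) - l.get j) else 0

/-- The `s`-dual `λ′ = (s−k_u, …, s−k_1)` of a biliaison type. -/
def sdual (s : ℕ) (l : List ℕ) : List ℕ := (l.map (fun k => s - k)).reverse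

/-! ### Auxiliary machinery -/

/-- Linear auxiliary form appearing in the closed formula for `qform`. -/
def auxG (s : ℕ) : List ℕ → ℤ
  | [] => 0
  | k :: t => (k:ℤ) * ((s:ℤ) - k - (2*(t.length:ℤ)+1)) + auxG s t

lemma get_sum (l : List ℕ) : ∑ i : Fin l.length, (l.get i : ℤ) = (l.sum : ℤ) := by
  induction l with
  | nil => simp
  | cons k t ih => simp [Fin.sum_univ_succ, ih]

lemma qform_cons (s k : ℕ) (t : List ℕ) :
    qform s (k :: t) = (k:ℤ)*((s:ℤ)-1)*((s:ℤ)-k) - 2*(k:ℤ)*((t.length:ℤ)*s - (t.sum:ℤ))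
      + qform s t := by
  have hrow : (∑ j : Fin t.length, (k:ℤ) * ((s:ℤ) - (t.get j))) = (k:ℤ) * ((t.length:ℤ)*s - t.sum) := by
    rw [← Finset.mul_sum, Finset.sum_sub_distrib, get_sum, Finset.sum_const]
    simp [mul_comm]
  have h2 : (∑ j : Fin (t.length+1), if (0:ℕ) < (j:ℕ) then (k:ℤ) * ((s:ℤ) - (k::t).get j) else 0)
      = (k:ℤ) * ((t.length:ℤ)*s - t.sum) := by
    rw [Fin.sum_univ_succ, ← hrow]
    simp
  have h1 : ∀ i : Fin t.length, (∑ j : Fin (t.length+1),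
      if ((i:ℕ)+1) < (j:ℕ) then ((t.get i):ℤ) * ((s:ℤ) - (k::t).get j) else 0)
      = ∑ j : Fin t.length, if (i:ℕ) < (j:ℕ) then ((t.get i):ℤ) * ((s:ℤ) - t.get j) else 0 := by
    intro i
    rw [Fin.sum_univ_succ]
    simp [Nat.succ_lt_succ_iff]
  have h1' : (∑ i : Fin t.length, ∑ j : Fin (t.length+1),
      if ((i:ℕ)+1) < (j:ℕ) then ((t.get i):ℤ) * ((s:ℤ) - (k::t).get j) else 0)
      = ∑ i : Fin t.length, ∑ j : Fin t.length, if (i:ℕ) < (j:ℕ) then ((t.get i):ℤ) * ((s:ℤ) - t.get j) else 0 :=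
    Finset.sum_congr rfl (fun i _ => h1 i)
  show (∑ i : Fin (t.length+1), ((k::t).get i : ℤ) * ((s : ℤ) - 1) * ((s : ℤ) - (k::t).get i))
      - 2 * ∑ i : Fin (t.length+1), ∑ j : Fin (t.length+1),
        (if (i : ℕ) < (j : ℕ) then ((k::t).get i : ℤ) * ((s : ℤ) - (k::t).get j) else 0) = _
  rw [Fin.sum_univ_succ, Fin.sum_univ_succ (f := fun i : Fin (t.length+1) =>
    ∑ j : Fin (t.length+1), if (i : ℕ) < (j : ℕ) then ((k::t).get i : ℤ) * ((s : ℤ) - (k::t).get j) else 0)]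
  simp only [List.get_eq_getElem, Fin.val_zero, Fin.val_succ, List.getElem_cons_zero,
    List.getElem_cons_succ] at h1' h2 ⊢
  rw [h1']
  erw [h2]
  unfold qform
  simp only [List.get_eq_getElem]
  ring

lemma qform_eq_auxG (s : ℕ) (l : List ℕ) :
    qform s l = ((l.sum : ℤ))^2 + (s:ℤ) * auxG s l := by
  induction l with
  | nil => simp [qform, auxG]
  | cons k t ih =>
      rw [qform_cons, ih]
      show _ = (((k:ℕ) + t.sum : ℕ) : ℤ)^2 + _
      push_cast
      simp only [auxG]
      ring

lemma maxgap (s : ℕ) : ∀ (t : List ℕ) (k : ℕ), (k :: t).Pairwise (· < ·) →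
    (∀ x ∈ k :: t, x < s) → k + t.length < s := by
  intro t
  induction t with
  | nil => intro k _ h; simpa using h k (by simp)
  | cons k' t' ih =>
      intro k hp hs
      have hp' := List.pairwise_cons.1 hp
      have h1 : k < k' := hp'.1 k' (by simp)
      have h2 := ih k' hp'.2 (fun x hx => hs x (List.mem_cons_of_mem _ hx))
      simp only [List.length_cons]
      omega

lemma sum_ub (s : ℕ) : ∀ (l : List ℕ), l.Pairwise (· < ·) → (∀ x ∈ l, x < s) →
    2 * (l.sum:ℤ) ≤ (l.length:ℤ) * (2*(s:ℤ) - l.length - 1) := by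
  intro l
  induction l with
  | nil => simp
  | cons k t ih =>
      intro hp hs
      have hp' := List.pairwise_cons.1 hp
      have h1 := ih hp'.2 (fun x hx => hs x (List.mem_cons_of_mem _ hx))
      have h2 : (k:ℤ) + (t.length:ℤ) + 1 ≤ (s:ℤ) := by
        have := maxgap s t k hp hs; push_cast; omega
      have hlen : ((k :: t).length : ℤ) = (t.length:ℤ) + 1 := by push_cast [List.length_cons]; ring
      have hsum : ((k :: t).sum : ℤ) = (k:ℤ) + (t.sum:ℤ) := by push_cast [List.sum_cons]; ring
      rw [hlen, hsum]
      nlinarith []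

lemma key_auxG (s : ℕ) : ∀ (l : List ℕ) (m : ℕ), 1 ≤ m → l.Pairwise (· < ·) →
    (∀ x ∈ l, m ≤ x ∧ x < s) →
    6*((s:ℤ)-1)*(l.length:ℤ)*((m:ℤ)-1) + 3*((s:ℤ)-1)*(l.length:ℤ)*((l.length:ℤ)+1)
      - 3*((m:ℤ)-1)*(l.length:ℤ)*((l.length:ℤ)-1) - ((l.length:ℤ)^3 - (l.length:ℤ))
      - 6*((m:ℤ)+(l.length:ℤ)-1)*(l.sum:ℤ) ≤ 6 * auxG s l := by
  intro l
  induction l with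
  | nil => intro m _ _ _; simp [auxG]
  | cons k t ih =>
      intro m hm hp hms
      have hp' := List.pairwise_cons.1 hp
      have hk := hms k (by simp)
      have hkm : (m:ℤ) ≤ (k:ℤ) := by exact_mod_cast hk.1
      have ht : ∀ x ∈ t, k+1 ≤ x ∧ x < s := fun x hx => ⟨hp'.1 x hx, (hms x (by simp [hx])).2⟩
      have ih' := ih (k+1) (by omega) hp'.2 ht
      have hσ := sum_ub s t hp'.2 (fun x hx => (ht x hx).2)
      have hks : (k:ℤ) + (t.length:ℤ) + 1 ≤ (s:ℤ) := by
        have := maxgap s t k hp (fun x hx => (hms x hx).2); push_cast; omega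
      have hlen : ((k :: t).length : ℤ) = (t.length:ℤ) + 1 := by push_cast [List.length_cons]; ring
      have hsum : ((k :: t).sum : ℤ) = (k:ℤ) + (t.sum:ℤ) := by push_cast [List.sum_cons]; ring
      rw [hlen, hsum]
      show _ ≤ 6 * ((k:ℤ) * ((s:ℤ) - k - (2*(t.length:ℤ)+1)) + auxG s t)
      simp only [Nat.cast_add, Nat.cast_one] at ih'
      nlinarith [mul_nonneg (sub_nonneg.2 hkm) (by linarith : (0:ℤ) ≤ (s:ℤ) - 1 - (t.length:ℤ) - (k:ℤ)),
        mul_nonneg (sub_nonneg.2 hkm) (by linarith : (0:ℤ) ≤ (t.length:ℤ)*(2*(s:ℤ) - t.length - 1) - 2*(t.sum:ℤ))]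

lemma assembly (s U d GG q : ℤ) (hU : 3 ≤ U) (hUs : U ≤ s - 1)
    (hq : q = d^2 + s * GG)
    (key : 3*(s-1)*U*(U+1) - (U^3 - U) - 6*U*d ≤ 6 * GG) :
    3*s^2 - 8*s + 1 ≤ q ∧ 2*s^2 - 4*s + 4 ≤ q := by
  have ht : (0:ℤ) ≤ U - 3 := by linarith
  have hv : (0:ℤ) ≤ s - 1 - U := by linarith
  have hs0 : (0:ℤ) ≤ s := by linarith
  have hsk : 0 ≤ s * (6*GG - (3*(s-1)*U*(U+1) - (U^3 - U) - 6*U*d)) :=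
    mul_nonneg hs0 (by linarith)
  constructor <;>
  nlinarith [hsk, sq_nonneg (2*d - s*U), mul_nonneg ht hv, mul_nonneg (mul_nonneg ht hv) hv,
    mul_nonneg (mul_nonneg ht ht) hv, mul_nonneg (mul_nonneg (mul_nonneg ht ht) hv) hv,
    mul_nonneg (mul_nonneg (mul_nonneg ht ht) ht) hv, mul_nonneg ht ht, mul_nonneg hv hv,
    mul_nonneg (mul_nonneg ht ht) ht, mul_nonneg (mul_nonneg (mul_nonneg ht ht) ht) ht]

section Pairs
variable (S A B : ℤ)

lemma quad1 (hs : 3 ≤ S) (hA : 1 ≤ A) (hAB : A < B) (hd : A + B = S) :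
    2*S*(S-2) ≤ (A+B)^2 + S*(A*(S-A-3)+B*(S-B-1)) := by
  have hB : B = S - A := by linarith
  subst hB
  nlinarith [mul_nonneg (mul_nonneg (by linarith : (0:ℤ) ≤ S)
    (by linarith : (0:ℤ) ≤ A - 1)) (by linarith : (0:ℤ) ≤ S - A - 2)]

lemma quad2 (hs : 3 ≤ S) (hA : 2 ≤ A) (hAB : A < B) (hd : A + B = S + 1) :
    3*S^2 - 8*S + 1 ≤ (A+B)^2 + S*(A*(S-A-3)+B*(S-B-1)) := by
  have hB : B = S + 1 - A := by linarith
  subst hB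
  nlinarith [mul_nonneg (mul_nonneg (by linarith : (0:ℤ) ≤ S)
    (by linarith : (0:ℤ) ≤ A - 2)) (by linarith : (0:ℤ) ≤ S - A - 2)]

lemma quad3 (hs : 3 ≤ S) (hA : 1 ≤ A) (hAB : A < B) (hd : A + B = S - 1) :
    3*S^2 - 8*S + 1 ≤ (A+B)^2 + S*(A*(S-A-3)+B*(S-B-1)) := by
  have hB : B = S - 1 - A := by linarith
  subst hB
  nlinarith [mul_nonneg (mul_nonneg (by linarith : (0:ℤ) ≤ S)
    (by linarith : (0:ℤ) ≤ A - 1)) (by linarith : (0:ℤ) ≤ S - A - 3)]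

lemma quad4 (hs : 3 ≤ S) (hA : 1 ≤ A) (hAB : A < B) (hd : A + B ≤ S - 2) :
    2*S^2 - 4*S + 4 ≤ (A+B)^2 + S*(A*(S-A-3)+B*(S-B-1)) := by
  nlinarith [mul_nonneg (by linarith : (0:ℤ) ≤ A - 1) (by linarith : (0:ℤ) ≤ S - A - B - 2),
    mul_nonneg (by linarith : (0:ℤ) ≤ B - 2) (by linarith : (0:ℤ) ≤ S - A - B - 2),
    mul_nonneg (mul_nonneg (by linarith : (0:ℤ) ≤ A - 1) (by linarith : (0:ℤ) ≤ S - A - B - 2)) (by linarith : (0:ℤ) ≤ S),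
    mul_nonneg (mul_nonneg (by linarith : (0:ℤ) ≤ B - 2) (by linarith : (0:ℤ) ≤ S - A - B - 2)) (by linarith : (0:ℤ) ≤ S),
    mul_nonneg (mul_nonneg (by linarith : (0:ℤ) ≤ B - A - 1) (by linarith : (0:ℤ) ≤ S - A - B - 2)) (by linarith : (0:ℤ) ≤ S),
    mul_nonneg (by linarith : (0:ℤ) ≤ A - 1) (by linarith : (0:ℤ) ≤ B - 2),
    mul_nonneg (mul_nonneg (by linarith : (0:ℤ) ≤ A - 1) (by linarith : (0:ℤ) ≤ B - 2)) (by linarith : (0:ℤ) ≤ S)]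

lemma quad5 (hs : 3 ≤ S) (hA : 1 ≤ A) (hAB : A < B) (hB : B ≤ S - 1) (hd : S + 2 ≤ A + B) :
    2*S^2 - 4*S + 4 ≤ (A+B)^2 + S*(A*(S-A-3)+B*(S-B-1)) := by
  have h := quad4 S (S - B) (S - A) hs (by linarith) (by linarith) (by linarith)
  nlinarith [h]

end Pairs

/-- Corollary 8.8: lower bounds for `q_s(λ)` when `u_λ ≥ 2`, according to the
residue `f` of `d_λ` modulo `s`. -/
theorem stmt8 (s : ℕ) (hs : 3 ≤ s) (l : List ℕ) (hl : SMinimal s l)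
    (hu : 2 ≤ l.length) (f : ℕ) (hf : f = l.sum % s) :
    (f = 0 → 2 * (s : ℤ) * ((s : ℤ) - 2) ≤ qform s l) ∧
    ((f = 1 ∨ f = s - 1) → 3 * (s : ℤ) ^ 2 - 8 * s + 1 ≤ qform s l) ∧
    (f ≠ 0 → f ≠ 1 → f ≠ s - 1 → 2 * (s : ℤ) ^ 2 - 4 * s + 4 ≤ qform s l) := by
  obtain ⟨hc, hmem⟩ := hl
  have hpw : l.Pairwise (· < ·) := List.isChain_iff_pairwise.mp hc
  have hS3 : (3:ℤ) ≤ (s:ℤ) := by exact_mod_cast hs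
  rcases l with _ | ⟨a, _ | ⟨b, rest⟩⟩
  · simp at hu
  · simp at hu
  rcases rest with _ | ⟨c, rest⟩
  · -- length-two case
    have hab : a < b := (List.pairwise_cons.1 hpw).1 b (by simp)
    have ha1 : 1 ≤ a := (hmem a (by simp)).1
    have hbs : b < s := (hmem b (by simp)).2
    have hq : qform s [a, b] = (((a:ℤ))+(b:ℤ))^2 +
        (s:ℤ)*((a:ℤ)*((s:ℤ)-(a:ℤ)-3)+(b:ℤ)*((s:ℤ)-(b:ℤ)-1)) := by
      rw [qform_eq_auxG]
      simp only [auxG, List.sum_cons, List.sum_nil, List.length_cons, List.length_nil]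
      push_cast
      ring
    have hfsum : f = (a + b) % s := by simpa using hf
    have hmod : (a+b < s ∧ (a+b) % s = a+b) ∨ (s ≤ a+b ∧ (a+b) % s = a+b-s) := by
      rcases Nat.lt_or_ge (a+b) s with h | h
      · exact Or.inl ⟨h, Nat.mod_eq_of_lt h⟩
      · exact Or.inr ⟨h, by rw [Nat.mod_eq_sub_mod h, Nat.mod_eq_of_lt (by omega)]⟩
    rw [hq]
    refine ⟨?_, ?_, ?_⟩
    · intro h0
      exact quad1 (s:ℤ) a b hS3 (by omega) (by omega) (by omega)
    · rintro (h1 | h1)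
      · exact quad2 (s:ℤ) a b hS3 (by omega) (by omega) (by omega)
      · exact quad3 (s:ℤ) a b hS3 (by omega) (by omega) (by omega)
    · intro h0 h1 hsm
      have hd : a + b ≤ s - 2 ∨ s + 2 ≤ a + b := by omega
      rcases hd with hd | hd
      · exact quad4 (s:ℤ) a b hS3 (by omega) (by omega) (by omega)
      · exact quad5 (s:ℤ) a b hS3 (by omega) (by omega) (by omega) (by omega)
  · -- length ≥ 3 case
    set L : List ℕ := a :: b :: c :: rest with hL
    have hlen3 : 3 ≤ L.length := by simp [hL]
    have hU3 : (3:ℤ) ≤ (L.length:ℤ) := by exact_mod_cast hlen3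
    have hUs : (L.length:ℤ) ≤ (s:ℤ) - 1 := by
      have hmg := maxgap s (b :: c :: rest) a hpw (fun x hx => (hmem x hx).2)
      have ha1 : 1 ≤ a := (hmem a (by simp [hL])).1
      have hlen : L.length = rest.length + 3 := by simp [hL]
      simp only [List.length_cons] at hmg
      omega
    have key := key_auxG s L 1 le_rfl hpw
      (fun x hx => ⟨(hmem x hx).1, (hmem x hx).2⟩)
    simp only [Nat.cast_one] at key
    have key' : 3*((s:ℤ)-1)*(L.length:ℤ)*((L.length:ℤ)+1) - ((L.length:ℤ)^3 - (L.length:ℤ))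
        - 6*(L.length:ℤ)*(L.sum:ℤ) ≤ 6 * auxG s L := by
      nlinarith [key]
    have hq := qform_eq_auxG s L
    have hmain := assembly (s:ℤ) (L.length:ℤ) (L.sum:ℤ) (auxG s L) (qform s L)
      hU3 hUs hq key'
    exact ⟨fun _ => by linarith [hmain.2], fun _ => by linarith [hmain.1],
      fun _ _ _ => by linarith [hmain.2]⟩
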